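/- Let T = ∪_{j=1}^p (T_j)_(u_j) be a good set of signed patterns (a disjoint union of homogeneous sets with distinct signs u_1,...,u_p ∈ {1,...,r}). Then |E_n^r(T)| = Σ_{j_1+...+j_p ≤ n} (r−p)^{n−j_1−...−j_p} · C(n; j_1,...,j_p, n−Σj_i)^2 · (n−j_1−...−j_p)! · Π_{i=1}^p |S_{j_i}(T_i)|. -/

import Mathlib

open Finset Equiv

/-- A signed permutation of length `n` with `r` signs: a permutation of `Fin n`
together with a sign in `Fin r` attached to each position. -/
abbrev SignedPerm (n r : ℕ) := Equiv.Perm (Fin n) × (Fin n → Fin r)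

/-- `SPContains p x` : the signed permutation `x` contains the signed pattern `p`,
i.e. there is an increasing sequence of positions on which the symbols of `x` are
order-isomorphic to the symbols of `p` and the signs match exactly. -/
def SPContains {k n r : ℕ} (p : SignedPerm k r) (x : SignedPerm n r) : Prop :=
  ∃ f : Fin k → Fin n, StrictMono f ∧
    (∀ i j : Fin k, p.1 i < p.1 j ↔ x.1 (f i) < x.1 (f j)) ∧
    (∀ i : Fin k, x.2 (f i) = p.2 i)

/-- Classical (unsigned) pattern containment for permutations. -/
def PContains {k m : ℕ} (τ : Equiv.Perm (Fin k)) (σ : Equiv.Perm (Fin m)) : Prop :=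
  ∃ f : Fin k → Fin m, StrictMono f ∧ ∀ i j : Fin k, τ i < τ j ↔ σ (f i) < σ (f j)

section Helpers

variable {n r p : ℕ}


lemma mem_image_iff_of_inj {α β : Type*} [DecidableEq β] {f : α → β}
    (hf : Function.Injective f) (s : Finset α) (x : α) :
    x ∈ s ↔ f x ∈ s.image f := by
  simp only [Finset.mem_image]
  constructor
  · exact fun h => ⟨x, h, rfl⟩
  · rintro ⟨y, hy, h⟩; rwa [← hf h]

/-- The pattern of a permutation `π` on a set of positions `s`. -/
noncomputable def patt (π : Equiv.Perm (Fin n)) (s : Finset (Fin n)) :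
    Equiv.Perm (Fin s.card) :=
  ((s.orderIsoOfFin rfl).toEquiv.trans
    (Equiv.subtypeEquiv π (fun x =>
      mem_image_iff_of_inj π.injective s x))).trans
    ((s.image π).orderIsoOfFin
      (Finset.card_image_of_injective s π.injective)).toEquiv.symm

lemma patt_spec (π : Equiv.Perm (Fin n)) (s : Finset (Fin n)) (a : Fin s.card) :
    ((s.image π).orderIsoOfFin (Finset.card_image_of_injective s π.injective)
      (patt π s a) : Fin n) = π (s.orderIsoOfFin rfl a) := by
  simp [patt]

lemma patt_lt (π : Equiv.Perm (Fin n)) (s : Finset (Fin n)) (a b : Fin s.card) :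
    patt π s a < patt π s b ↔
      π (s.orderIsoOfFin rfl a) < π (s.orderIsoOfFin rfl b) := by
  rw [← patt_spec π s a, ← patt_spec π s b, Subtype.coe_lt_coe]
  exact (OrderIso.lt_iff_lt ((s.image π).orderIsoOfFin (Finset.card_image_of_injective s π.injective))).symm

/-- Two permutations of `Fin m` with the same order comparisons are equal. -/
lemma perm_eq_of_lt_iff {m : ℕ} (f h : Equiv.Perm (Fin m))
    (H : ∀ a b, f a < f b ↔ h a < h b) : f = h := by
  have hmono : StrictMono (fun x => (f.symm.trans h) x) := by
    intro x y hxy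
    have h2 : x < y ↔ f (f.symm x) < f (f.symm y) := by simp
    rw [h2, H] at hxy
    exact hxy
  set e : Fin m ≃o Fin m :=
    StrictMono.orderIsoOfSurjective _ hmono (f.symm.trans h).surjective with he
  ext a
  have h3 := congrArg (fun (o : Fin m ≃o Fin m) => o (f a))
    (Subsingleton.elim e (OrderIso.refl (Fin m)))
  simp only [he, OrderIso.refl_apply, StrictMono.coe_orderIsoOfSurjective] at h3
  have h4 : h (f.symm (f a)) = f a := h3
  rw [Equiv.symm_apply_apply] at h4
  exact congrArg Fin.val h4.symm

/-- The single-block shuffling permutation. -/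
noncomputable def rho {n : ℕ} (s : Finset (Fin n)) (σ : Equiv.Perm (Fin s.card)) :
    Equiv.Perm (Fin n) :=
  σ.extendDomain (s.orderIsoOfFin rfl).toEquiv

lemma rho_apply_mem {s : Finset (Fin n)} (σ : Equiv.Perm (Fin s.card)) (a : Fin s.card) :
    rho s σ (s.orderIsoOfFin rfl a) = s.orderIsoOfFin rfl (σ a) := by
  rw [rho, Equiv.Perm.extendDomain_apply_subtype σ (s.orderIsoOfFin rfl).toEquiv
    (((s.orderIsoOfFin rfl) a).2 : ((s.orderIsoOfFin rfl a : Fin n)) ∈ s)]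
  have hs : (s.orderIsoOfFin rfl).toEquiv.symm
      ⟨((s.orderIsoOfFin rfl) a : Fin n), ((s.orderIsoOfFin rfl) a).2⟩ = a := by
    rw [show (⟨((s.orderIsoOfFin rfl) a : Fin n), ((s.orderIsoOfFin rfl) a).2⟩ :
        {x // x ∈ (s : Finset (Fin n))}) = (s.orderIsoOfFin rfl).toEquiv a from Subtype.ext rfl]
    exact Equiv.symm_apply_apply _ a
  rw [hs]
  rfl

lemma rho_apply_not_mem {s : Finset (Fin n)} (σ : Equiv.Perm (Fin s.card)) {x : Fin n}
    (hx : x ∉ s) : rho s σ x = x :=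
  Equiv.Perm.extendDomain_apply_not_subtype σ _ hx

lemma patt_mul_rho (π : Equiv.Perm (Fin n)) (s : Finset (Fin n))
    (σ : Equiv.Perm (Fin s.card)) : patt (π * rho s σ) s = patt π s * σ := by
  apply perm_eq_of_lt_iff
  intro a b
  rw [patt_lt]
  have ha : (π * rho s σ) (s.orderIsoOfFin rfl a) = π (s.orderIsoOfFin rfl (σ a)) := by
    rw [Equiv.Perm.mul_apply, rho_apply_mem]
  have hb : (π * rho s σ) (s.orderIsoOfFin rfl b) = π (s.orderIsoOfFin rfl (σ b)) := by
    rw [Equiv.Perm.mul_apply, rho_apply_mem]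
  rw [ha, hb, ← patt_lt]
  rfl

lemma patt_congr (π₁ π₂ : Equiv.Perm (Fin n)) (s : Finset (Fin n))
    (H : ∀ x ∈ s, π₁ x = π₂ x) : patt π₁ s = patt π₂ s := by
  apply perm_eq_of_lt_iff
  intro a b
  rw [patt_lt, patt_lt, H _ (s.orderIsoOfFin rfl a).2, H _ (s.orderIsoOfFin rfl b).2]

lemma patt_mul_rho_other (π : Equiv.Perm (Fin n)) {s t : Finset (Fin n)}
    (hst : Disjoint s t) (σ : Equiv.Perm (Fin s.card)) :
    patt (π * rho s σ) t = patt π t := by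
  apply patt_congr
  intro x hx
  rw [Equiv.Perm.mul_apply, rho_apply_not_mem σ (Finset.disjoint_right.mp hst hx)]

lemma patt_one {n : ℕ} (s : Finset (Fin n)) : patt 1 s = 1 := by
  apply perm_eq_of_lt_iff
  intro a b
  rw [patt_lt]
  simp only [Equiv.Perm.one_apply]
  exact Subtype.coe_lt_coe.trans (OrderIso.lt_iff_lt (s.orderIsoOfFin rfl))

lemma exists_rho_tuple (A : Fin p → Finset (Fin n))
    (hdisj : ∀ i j, i ≠ j → Disjoint (A i) (A j))
    (s : ∀ i, Equiv.Perm (Fin (A i).card)) :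
    ∃ ρ : Equiv.Perm (Fin n), ∀ π : Equiv.Perm (Fin n), ∀ i,
      patt (π * ρ) (A i) = patt π (A i) * s i := by
  suffices H : ∀ S : Finset (Fin p), ∃ ρ : Equiv.Perm (Fin n), ∀ π : Equiv.Perm (Fin n), ∀ i,
      patt (π * ρ) (A i) = patt π (A i) * (if i ∈ S then s i else 1) by
    obtain ⟨ρ, hρ⟩ := H Finset.univ
    exact ⟨ρ, fun π i => by simpa using hρ π i⟩
  intro S
  induction S using Finset.induction_on with
  | empty => exact ⟨1, fun π i => by simp⟩
  | @insert a S ha ih =>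
    obtain ⟨ρ, hρ⟩ := ih
    refine ⟨rho (A a) (s a) * ρ, fun π i => ?_⟩
    rw [← mul_assoc, hρ (π * rho (A a) (s a)) i]
    by_cases hia : i = a
    · subst hia
      rw [patt_mul_rho, if_neg ha, if_pos (Finset.mem_insert_self _ _), mul_one]
    · rw [patt_mul_rho_other π (hdisj a i (Ne.symm hia)) (s a)]
      simp [Finset.mem_insert, hia]

open scoped Classical in
lemma card_fiber_eq (A : Fin p → Finset (Fin n))
    (hdisj : ∀ i j, i ≠ j → Disjoint (A i) (A j))
    (s : ∀ i, Equiv.Perm (Fin (A i).card)) :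
    (Finset.univ.filter fun π : Equiv.Perm (Fin n) =>
        ∀ i, patt π (A i) = s i).card =
    (Finset.univ.filter fun π : Equiv.Perm (Fin n) =>
        ∀ i, patt π (A i) = 1).card := by
  obtain ⟨ρ, hρ⟩ := exists_rho_tuple A hdisj s
  symm
  apply Finset.card_bij (fun π _ => π * ρ)
  · intro π hπ
    simp only [Finset.mem_filter, Finset.mem_univ, true_and] at hπ ⊢
    intro i
    rw [hρ π i, hπ i, one_mul]
  · intro π₁ h₁ π₂ h₂ h
    exact mul_right_cancel h
  · intro π' hπ'
    simp only [Finset.mem_filter, Finset.mem_univ, true_and] at hπ'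
    refine ⟨π' * ρ⁻¹, ?_, by simp⟩
    simp only [Finset.mem_filter, Finset.mem_univ, true_and]
    intro i
    have h1 : patt (π' * ρ⁻¹ * ρ) (A i) = patt (π' * ρ⁻¹) (A i) * s i := hρ _ i
    rw [inv_mul_cancel_right] at h1
    rw [hπ' i] at h1
    have h2 : patt (π' * ρ⁻¹) (A i) * s i = 1 * s i := by rw [← h1, one_mul]
    exact mul_right_cancel h2

open scoped Classical in
lemma card_patt_cond (A : Fin p → Finset (Fin n))
    (hdisj : ∀ i j, i ≠ j → Disjoint (A i) (A j))
    (Q : (∀ i, Equiv.Perm (Fin (A i).card)) → Prop) :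
    Nat.card {π : Equiv.Perm (Fin n) // Q (fun i => patt π (A i))} *
      ∏ i, ((A i).card).factorial =
    Nat.card {s : ∀ i, Equiv.Perm (Fin (A i).card) // Q s} * n.factorial := by
  rw [Nat.card_eq_fintype_card, Nat.card_eq_fintype_card,
    Fintype.card_subtype, Fintype.card_subtype]
  set F := (Finset.univ.filter fun π : Equiv.Perm (Fin n) =>
      ∀ i, patt π (A i) = 1).card with hF
  have key : ∀ (Q' : (∀ i, Equiv.Perm (Fin (A i).card)) → Prop),
      (Finset.univ.filter fun π : Equiv.Perm (Fin n) =>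
        Q' (fun i => patt π (A i))).card = (Finset.univ.filter Q').card * F := by
    intro Q'
    rw [Finset.card_eq_sum_card_fiberwise
      (f := fun π : Equiv.Perm (Fin n) => fun i => patt π (A i))
      (t := Finset.univ.filter Q')
      (fun x hx => by
        simp only [Finset.mem_coe, Finset.mem_filter, Finset.mem_univ, true_and] at hx ⊢
        exact hx)]
    rw [Finset.sum_congr rfl (fun b hb => ?_), Finset.sum_const, smul_eq_mul]
    simp only [Finset.mem_filter, Finset.mem_univ, true_and] at hb
    rw [Finset.filter_filter]
    have : ∀ π : Equiv.Perm (Fin n),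
        (Q' (fun i => patt π (A i)) ∧ (fun i => patt π (A i)) = b) ↔
        (∀ i, patt π (A i) = b i) := by
      intro π
      constructor
      · rintro ⟨_, h⟩ i; rw [← h]
      · intro h
        have : (fun i => patt π (A i)) = b := funext h
        exact ⟨this ▸ hb, this⟩
    rw [Finset.filter_congr (fun π _ => this π)]
    exact card_fiber_eq A hdisj b
  have htop := key (fun _ => True)
  simp only [Finset.filter_true] at htop
  have hcard1 : (Finset.univ : Finset (Equiv.Perm (Fin n))).card = n.factorial := by
    simp [Finset.card_univ, Fintype.card_perm]
  have hcard2 : (Finset.univ : Finset (∀ i, Equiv.Perm (Fin (A i).card))).card =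
      ∏ i, ((A i).card).factorial := by
    simp [Finset.card_univ, Fintype.card_pi, Fintype.card_perm]
  rw [key Q, mul_assoc]
  congr 1
  rw [← hcard1, htop, hcard2, mul_comm]

/-- Sum of fiber cardinalities. -/
lemma sum_card_fiber {β : Type*} [Fintype β] [DecidableEq β] (c : Fin n → β) :
    ∑ b : β, (Finset.univ.filter fun x => c x = b).card = n := by
  rw [← Finset.card_eq_sum_card_fiberwise (fun x _ => Finset.mem_univ (c x))]
  simp

/-- Fiber cardinalities are invariant under precomposition with a permutation. -/
lemma card_fiber_comp_perm {β : Type*} [DecidableEq β] (c : Fin n → β)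
    (π : Equiv.Perm (Fin n)) (b : β) :
    (Finset.univ.filter fun x => c (π x) = b).card =
    (Finset.univ.filter fun x => c x = b).card := by
  apply Finset.card_bij (fun x _ => π x)
  · intro x hx
    simp only [Finset.mem_filter, Finset.mem_univ, true_and] at hx ⊢
    exact hx
  · intro x₁ _ x₂ _ h
    exact π.injective h
  · intro y hy
    simp only [Finset.mem_filter, Finset.mem_univ, true_and] at hy
    exact ⟨π.symm y, by simp [hy], by simp⟩

/-- Gluing: two functions with equal fiber cardinalities differ by a permutation. -/
lemma exists_perm_comp {β : Type*} [Fintype β] [DecidableEq β] (c c' : Fin n → β)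
    (h : ∀ b, (Finset.univ.filter fun x => c x = b).card =
        (Finset.univ.filter fun x => c' x = b).card) :
    ∃ π : Equiv.Perm (Fin n), c' ∘ π = c := by
  classical
  have hcard : ∀ b, Fintype.card {x // c x = b} = Fintype.card {x // c' x = b} := by
    intro b
    rw [Fintype.card_subtype, Fintype.card_subtype]
    exact h b
  have e : ∀ b, {x // c x = b} ≃ {x // c' x = b} := fun b => Fintype.equivOfCardEq (hcard b)
  refine ⟨(Equiv.sigmaFiberEquiv c).symm.trans
    ((Equiv.sigmaCongrRight e).trans (Equiv.sigmaFiberEquiv c')), funext fun x => ?_⟩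
  exact ((e (c x)) ⟨x, rfl⟩).2

/-- Existence of a function with prescribed fiber sizes. -/
lemma exists_label_fun (j : Fin p → ℕ) (hj : ∑ i, j i ≤ n) :
    ∃ c : Fin n → Option (Fin p),
      ∀ i, (Finset.univ.filter fun x => c x = some i).card = j i := by
  classical
  have hcard : Fintype.card (Σ i : Fin p, Fin (j i)) ≤ Fintype.card (Fin n) := by
    simpa using hj
  obtain ⟨ι⟩ := Function.Embedding.nonempty_of_card_le hcard
  refine ⟨fun x => (Function.partialInv ι x).map Sigma.fst, fun i => ?_⟩
  have hpi := Function.partialInv_of_injective ι.injective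
  have hmem : ∀ x : Fin n, ((Function.partialInv ι x).map Sigma.fst = some i) ↔
      ∃ y : Fin (j i), ι ⟨i, y⟩ = x := by
    intro x
    rw [Option.map_eq_some_iff]
    constructor
    · rintro ⟨⟨wi, wy⟩, hw, hw1⟩
      simp only at hw1
      subst hw1
      exact ⟨wy, (hpi _ x).mp hw⟩
    · rintro ⟨y, hy⟩
      exact ⟨⟨i, y⟩, (hpi ⟨i, y⟩ x).mpr hy, rfl⟩
  have : (Finset.univ.filter fun x => (Function.partialInv ι x).map Sigma.fst = some i) =
      Finset.univ.image (fun y : Fin (j i) => ι ⟨i, y⟩) := by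
    ext x
    simp only [Finset.mem_filter, Finset.mem_univ, true_and, Finset.mem_image, hmem x]
  rw [this, Finset.card_image_of_injective _
    (fun y₁ y₂ hy => by
      have := ι.injective hy
      exact eq_of_heq (Sigma.mk.inj_iff.mp this).2), Finset.card_univ, Fintype.card_fin]

/-- Translation equivalence between fibers of `g ↦ c₀ ∘ g`. -/
def fiberTransEquiv {β : Type*} (c₀ c : Fin n → β) (π₀ : Equiv.Perm (Fin n))
    (hπ₀ : c₀ ∘ π₀ = c) :
    {g : Equiv.Perm (Fin n) // c₀ ∘ g = c} ≃ {g : Equiv.Perm (Fin n) // c₀ ∘ g = c₀} where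
  toFun g := ⟨g.1 * π₀⁻¹, by
    funext x
    have h1 := congrFun g.2 (π₀⁻¹ x)
    have h2 := congrFun hπ₀ (π₀⁻¹ x)
    simp only [Function.comp_apply, Equiv.Perm.mul_apply] at h1 h2 ⊢
    rw [h1, ← h2, ← Equiv.Perm.mul_apply, mul_inv_cancel, Equiv.Perm.one_apply]⟩
  invFun g := ⟨g.1 * π₀, by
    funext x
    have h1 := congrFun g.2 (π₀ x)
    have h2 := congrFun hπ₀ x
    simp only [Function.comp_apply, Equiv.Perm.mul_apply] at h1 h2 ⊢
    rw [h1, h2]⟩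
  left_inv g := Subtype.ext (by simp [mul_assoc])
  right_inv g := Subtype.ext (by simp [mul_assoc])

open scoped Classical in
/-- The number of label functions with prescribed fiber sizes. -/
lemma card_label_fun (j : Fin p → ℕ) (hj : ∑ i, j i ≤ n) :
    (Finset.univ.filter fun c : Fin n → Option (Fin p) =>
        ∀ i, (Finset.univ.filter fun x => c x = some i).card = j i).card *
      ((∏ i, (j i).factorial) * (n - ∑ i, j i).factorial) = n.factorial := by
  classical
  obtain ⟨c₀, hc₀⟩ := exists_label_fun j hj
  set SizeSet := Finset.univ.filter fun c : Fin n → Option (Fin p) =>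
      ∀ i, (Finset.univ.filter fun x => c x = some i).card = j i with hSS
  -- the `none` fiber of any member of SizeSet has size n - ∑ j
  have hnone : ∀ c : Fin n → Option (Fin p),
      (∀ i, (Finset.univ.filter fun x => c x = some i).card = j i) →
      (Finset.univ.filter fun x => c x = none).card = n - ∑ i, j i := by
    intro c hc
    have hsum := sum_card_fiber c
    rw [Fintype.sum_option] at hsum
    simp only [hc] at hsum
    omega
  -- the number of permutations fixing c₀ fiberwise
  have hstab : Fintype.card {g : Equiv.Perm (Fin n) // c₀ ∘ g = c₀} =
      (∏ i, (j i).factorial) * (n - ∑ i, j i).factorial := by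
    rw [DomMulAct.stabilizer_card c₀, Fintype.prod_option]
    have h1 : Fintype.card {a // c₀ a = none} = n - ∑ i, j i := by
      rw [Fintype.card_subtype]
      exact hnone c₀ hc₀
    have h2 : ∀ i, Fintype.card {a // c₀ a = some i} = j i := by
      intro i
      rw [Fintype.card_subtype]
      exact hc₀ i
    simp only [h1, h2]
    ring
  -- partition Perm (Fin n) by the map π ↦ c₀ ∘ π
  have hpart : (Finset.univ : Finset (Equiv.Perm (Fin n))).card =
      ∑ c ∈ SizeSet, (Finset.univ.filter fun π : Equiv.Perm (Fin n) => c₀ ∘ ⇑π = c).card := by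
    apply Finset.card_eq_sum_card_fiberwise (f := fun π : Equiv.Perm (Fin n) => c₀ ∘ ⇑π)
    intro π _
    rw [hSS, Finset.mem_coe, Finset.mem_filter]
    refine ⟨Finset.mem_univ _, fun i => ?_⟩
    have := card_fiber_comp_perm c₀ π (some i)
    simp only [Function.comp_apply]
    rw [this]
    exact hc₀ i
  -- each fiber has the stabilizer's cardinality
  have hfiber : ∀ c ∈ SizeSet,
      (Finset.univ.filter fun π : Equiv.Perm (Fin n) => c₀ ∘ ⇑π = c).card =
      (∏ i, (j i).factorial) * (n - ∑ i, j i).factorial := by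
    intro c hc
    rw [hSS, Finset.mem_filter] at hc
    obtain ⟨π₀, hπ₀⟩ := exists_perm_comp c c₀ (by
      intro b
      match b with
      | some i => rw [hc.2 i, hc₀ i]
      | none => rw [hnone c hc.2, hnone c₀ hc₀])
    rw [← Fintype.card_subtype, Nat.card_eq_fintype_card.symm,
      Nat.card_congr (fiberTransEquiv c₀ c π₀ hπ₀), Nat.card_eq_fintype_card, hstab]
  rw [Finset.sum_congr rfl hfiber, Finset.sum_const, smul_eq_mul] at hpart
  rw [← hpart, Finset.card_univ, Fintype.card_perm, Fintype.card_fin]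

open scoped Classical in
lemma card_sign_fun (u : Fin p → Fin r) (hu : Function.Injective u)
    (j : Fin p → ℕ) :
    (Finset.univ.filter fun g : Fin n → Fin r =>
        ∀ i, (Finset.univ.filter fun x => g x = u i).card = j i).card =
    (Finset.univ.filter fun c : Fin n → Option (Fin p) =>
        ∀ i, (Finset.univ.filter fun x => c x = some i).card = j i).card *
      (r - p) ^ (n - ∑ i, j i) := by
  classical
  set uinv : Fin r → Option (Fin p) := Function.partialInv u with huinv
  have hpi : Function.IsPartialInv u uinv := Function.partialInv_of_injective hu
  have hsome : ∀ (v : Fin r) (i : Fin p), uinv v = some i ↔ v = u i := by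
    intro v i
    rw [hpi i v]
    exact eq_comm
  have hnone : ∀ v : Fin r, uinv v = none ↔ ¬∃ i, u i = v := by
    intro v
    constructor
    · rintro h ⟨i, hi⟩
      rw [← hi, (hsome (u i) i).mpr rfl] at h
      exact Option.some_ne_none i h
    · intro h
      rw [huinv]
      unfold Function.partialInv
      rw [dif_neg h]
  have hfib : ∀ (g : Fin n → Fin r) (i : Fin p),
      (Finset.univ.filter fun x => uinv (g x) = some i) =
      (Finset.univ.filter fun x => g x = u i) := by
    intro g i
    ext x
    simp [hsome]
  set SizeSet := Finset.univ.filter fun c : Fin n → Option (Fin p) =>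
      ∀ i, (Finset.univ.filter fun x => c x = some i).card = j i with hSS
  set GSet := Finset.univ.filter fun g : Fin n → Fin r =>
      ∀ i, (Finset.univ.filter fun x => g x = u i).card = j i with hGS
  have hmem : ∀ g : Fin n → Fin r, g ∈ GSet ↔ (uinv ∘ g) ∈ SizeSet := by
    intro g
    rw [hGS, hSS, Finset.mem_filter, Finset.mem_filter]
    constructor
    · rintro ⟨_, h⟩
      refine ⟨Finset.mem_univ _, fun i => ?_⟩
      simp only [Function.comp_apply]
      rw [hfib g i]
      exact h i
    · rintro ⟨_, h⟩
      refine ⟨Finset.mem_univ _, fun i => ?_⟩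
      rw [← hfib g i]
      have := h i
      simpa using this
  have hpart : GSet.card = ∑ c ∈ SizeSet,
      (GSet.filter fun g => uinv ∘ g = c).card :=
    Finset.card_eq_sum_card_fiberwise (fun g hg => (hmem g).mp hg)
  have hfix : ∀ c ∈ SizeSet, (GSet.filter fun g => uinv ∘ g = c) =
      (Finset.univ.filter fun g : Fin n → Fin r => uinv ∘ g = c) := by
    intro c hc
    ext g
    simp only [Finset.mem_filter, Finset.mem_univ, true_and]
    constructor
    · rintro ⟨_, h⟩; exact h
    · intro h
      exact ⟨(hmem g).mpr (h ▸ hc), h⟩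
  have hcount : ∀ c : Fin n → Option (Fin p),
      (∀ i, (Finset.univ.filter fun x => c x = some i).card = j i) →
      (Finset.univ.filter fun g : Fin n → Fin r => uinv ∘ g = c).card =
        (r - p) ^ (n - ∑ i, j i) := by
    intro c hc
    rw [← Fintype.card_subtype]
    have e1 : {g : Fin n → Fin r // uinv ∘ g = c} ≃ ∀ x : Fin n, {v : Fin r // uinv v = c x} :=
      (Equiv.subtypeEquivRight (fun g => by
        rw [funext_iff]; rfl)).trans (Equiv.subtypePiEquivPi)
    rw [Fintype.card_congr e1, Fintype.card_pi]
    have hval : ∀ x : Fin n, Fintype.card {v : Fin r // uinv v = c x} =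
        if c x = none then r - p else 1 := by
      intro x
      by_cases hx : c x = none
      · rw [if_pos hx, hx]
        rw [Fintype.card_congr (Equiv.subtypeEquivRight (fun v => hnone v))]
        rw [Fintype.card_subtype_compl]
        have e2 : {v : Fin r // ∃ i, u i = v} ≃ Fin p :=
          ((Equiv.ofInjective u hu).symm : ↥(Set.range u) ≃ Fin p)
        rw [(Fintype.card_congr e2).trans (Fintype.card_fin p), Fintype.card_fin]
      · rw [if_neg hx]
        obtain ⟨i, hi⟩ := Option.ne_none_iff_exists'.mp hx
        rw [hi]
        rw [Fintype.card_congr (Equiv.subtypeEquivRight (fun v => hsome v i)),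
          Fintype.card_subtype_eq]
    rw [Finset.prod_congr rfl (fun x _ => hval x)]
    rw [Finset.prod_ite, Finset.prod_const, Finset.prod_const_one, mul_one]
    congr 1
    have hsum := sum_card_fiber c
    rw [Fintype.sum_option] at hsum
    simp only [hc] at hsum
    omega
  rw [hpart, Finset.sum_congr rfl (fun c hc => by
    rw [hfix c hc, hcount c (by rw [hSS, Finset.mem_filter] at hc; exact hc.2)]),
    Finset.sum_const, smul_eq_mul]

lemma spContains_iff {k : ℕ} (τ : Equiv.Perm (Fin k)) (π : Equiv.Perm (Fin n))
    (g : Fin n → Fin r) (v : Fin r) :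
    SPContains (τ, fun _ => v) (π, g) ↔
      PContains τ (patt π (Finset.univ.filter fun x => g x = v)) := by
  classical
  set A := Finset.univ.filter fun x => g x = v with hA
  constructor
  · rintro ⟨f, hmono, hord, hsign⟩
    refine ⟨fun i => (A.orderIsoOfFin rfl).symm ⟨f i, by simp only [hA, Finset.mem_filter, Finset.mem_univ, true_and]; exact hsign i⟩, ?_, ?_⟩
    · intro i j hij
      rw [← OrderIso.lt_iff_lt (A.orderIsoOfFin rfl)]
      simp only [OrderIso.apply_symm_apply]
      exact Subtype.mk_lt_mk.mpr (hmono hij)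
    · intro i j
      rw [patt_lt]
      simp only [OrderIso.apply_symm_apply]
      exact hord i j
  · rintro ⟨f, hmono, hord⟩
    refine ⟨fun i => (A.orderIsoOfFin rfl (f i) : Fin n), ?_, ?_, ?_⟩
    · intro i j hij
      exact Subtype.coe_lt_coe.mpr ((A.orderIsoOfFin rfl).lt_iff_lt.mpr (hmono hij))
    · intro i j
      rw [hord i j, patt_lt]
    · intro i
      have := (A.orderIsoOfFin rfl (f i)).2
      simp only [hA, Finset.mem_filter, Finset.mem_univ, true_and] at this
      exact this

end Helpers

open scoped Classical

/-- counting avoiders of a good set `T = ∪_{i} (T_i)_(u_i)`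
(homogeneous parts with pairwise distinct signs `u i`). -/
theorem card_avoid_good_set (n r p : ℕ) (k : Fin p → ℕ)
    (T : ∀ i : Fin p, Set (Equiv.Perm (Fin (k i))))
    (u : Fin p → Fin r) (hu : Function.Injective u) :
    Nat.card {x : SignedPerm n r //
        ∀ i : Fin p, ∀ τ ∈ T i, ¬ SPContains (τ, fun _ => u i) x} =
    ∑ j ∈ (Fintype.piFinset fun _ : Fin p => Finset.range (n + 1)).filter
        (fun j => ∑ i, j i ≤ n),
      (r - p) ^ (n - ∑ i, j i) *
        (n.factorial / ((∏ i, (j i).factorial) * (n - ∑ i, j i).factorial)) ^ 2 *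
        (n - ∑ i, j i).factorial *
        ∏ i, Nat.card {σ : Equiv.Perm (Fin (j i)) // ∀ τ ∈ T i, ¬ PContains τ σ} := by
  set A : (Fin n → Fin r) → Fin p → Finset (Fin n) :=
    fun g i => Finset.univ.filter fun x => g x = u i with hA
  set aT : (i : Fin p) → ℕ → ℕ :=
    fun i jv => Nat.card {σ : Equiv.Perm (Fin jv) // ∀ τ ∈ T i, ¬ PContains τ σ} with haT
  -- Step 1: rewrite avoidance via patterns
  have hcond : ∀ x : SignedPerm n r,
      (∀ i, ∀ τ ∈ T i, ¬ SPContains (τ, fun _ => u i) x) ↔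
      (∀ i, ∀ τ ∈ T i, ¬ PContains τ (patt x.1 (A x.2 i))) := by
    intro x
    refine forall_congr' fun i => forall₂_congr fun τ _ => not_congr ?_
    exact spContains_iff τ x.1 x.2 (u i)
  -- Step 2: sigma decomposition over the sign function
  have e0 : {x : SignedPerm n r //
        ∀ i, ∀ τ ∈ T i, ¬ SPContains (τ, fun _ => u i) x} ≃
      Σ g : Fin n → Fin r, {π : Equiv.Perm (Fin n) //
        ∀ i, ∀ τ ∈ T i, ¬ PContains τ (patt π (A g i))} :=
    { toFun := fun x => ⟨x.1.2, x.1.1, fun i => ((hcond x.1).mp x.2) i⟩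
      invFun := fun s => ⟨(s.2.1, s.1), (hcond (s.2.1, s.1)).mpr s.2.2⟩
      left_inv := fun x => rfl
      right_inv := fun s => rfl }
  rw [Nat.card_congr e0, Nat.card_eq_fintype_card, Fintype.card_sigma]
  -- Step 3: per sign function count
  set N : (Fin n → Fin r) → ℕ := fun g =>
    Nat.card {π : Equiv.Perm (Fin n) //
      ∀ i, ∀ τ ∈ T i, ¬ PContains τ (patt π (A g i))} with hN
  have hNcard : ∀ g : Fin n → Fin r,
      Fintype.card {π : Equiv.Perm (Fin n) //
        ∀ i, ∀ τ ∈ T i, ¬ PContains τ (patt π (A g i))} = N g := by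
    intro g
    exact Nat.card_eq_fintype_card.symm
  have hdisj : ∀ g : Fin n → Fin r, ∀ i i' : Fin p, i ≠ i' →
      Disjoint (A g i) (A g i') := by
    intro g i i' hii
    rw [Finset.disjoint_left]
    intro x hx hx'
    simp only [hA, Finset.mem_filter] at hx hx'
    exact hii (hu (hx.2 ▸ hx'.2 ▸ rfl))
  have hQcard : ∀ g : Fin n → Fin r,
      Nat.card {s : ∀ i, Equiv.Perm (Fin ((A g i).card)) //
        ∀ i, ∀ τ ∈ T i, ¬ PContains τ (s i)} = ∏ i, aT i ((A g i).card) := by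
    intro g
    rw [Nat.card_congr
      (Equiv.subtypePiEquivPi (p := fun i (σ : Equiv.Perm (Fin ((A g i).card))) =>
        ∀ τ ∈ T i, ¬ PContains τ σ)), Nat.card_pi]
  have NgEq : ∀ g : Fin n → Fin r,
      N g * ∏ i, ((A g i).card).factorial =
      (∏ i, aT i ((A g i).card)) * n.factorial := by
    intro g
    have h1 := card_patt_cond (A g) (hdisj g)
      (fun s => ∀ i, ∀ τ ∈ T i, ¬ PContains τ (s i))
    exact h1.trans (congrArg (· * n.factorial) (hQcard g))
  -- Step 4: group sign functions by fiber sizes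
  have hmaps : ∀ g : Fin n → Fin r, (fun i => (A g i).card) ∈
      (Fintype.piFinset fun _ : Fin p => Finset.range (n + 1)).filter
        (fun j => ∑ i, j i ≤ n) := by
    intro g
    have hle : ∀ i, (A g i).card ≤ n := by
      intro i
      have := Finset.card_le_card (Finset.subset_univ (A g i))
      simpa using this
    have hsum : ∑ i, (A g i).card ≤ n := by
      rw [← Finset.card_biUnion (fun i _ i' _ h => hdisj g i i' h)]
      have := Finset.card_le_card
        (Finset.subset_univ ((Finset.univ : Finset (Fin p)).biUnion (A g)))
      simpa using this
    rw [Finset.mem_filter]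
    exact ⟨Fintype.mem_piFinset.mpr fun i => Finset.mem_range.mpr
      (Nat.lt_succ_of_le (hle i)), hsum⟩
  rw [Finset.sum_congr rfl (fun g _ => hNcard g),
    ← Finset.sum_fiberwise_of_maps_to (fun g _ => hmaps g) N]
  -- Step 5: evaluate each group
  apply Finset.sum_congr rfl
  intro j hj
  rw [Finset.mem_filter] at hj
  have hjn : ∑ i, j i ≤ n := hj.2
  set m := n - ∑ i, j i with hm
  set Fc := (Finset.univ.filter fun c : Fin n → Option (Fin p) =>
      ∀ i, (Finset.univ.filter fun x => c x = some i).card = j i).card with hFc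
  have hFcEq : Fc * ((∏ i, (j i).factorial) * m.factorial) = n.factorial :=
    card_label_fun j hjn
  have hDpos : 0 < (∏ i, (j i).factorial) * m.factorial :=
    Nat.mul_pos (Finset.prod_pos fun i _ => Nat.factorial_pos _) (Nat.factorial_pos _)
  have hdiv : n.factorial / ((∏ i, (j i).factorial) * m.factorial) = Fc :=
    Nat.div_eq_of_eq_mul_left hDpos hFcEq.symm
  -- per-g value of N on the fiber
  have hval : ∀ g ∈ Finset.univ.filter
      (fun g : Fin n → Fin r => (fun i => (A g i).card) = j),
      N g = (∏ i, aT i (j i)) * (Fc * m.factorial) := by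
    intro g hg
    rw [Finset.mem_filter] at hg
    have hsz : ∀ i, (A g i).card = j i := fun i => congrFun hg.2 i
    have h1 := NgEq g
    simp only [hsz] at h1
    have h2 : N g * ∏ i, (j i).factorial =
        ((∏ i, aT i (j i)) * (Fc * m.factorial)) * ∏ i, (j i).factorial := by
      rw [h1, ← hFcEq]; ring
    exact Nat.eq_of_mul_eq_mul_right
      (Finset.prod_pos fun i _ => Nat.factorial_pos _) h2
  rw [Finset.sum_congr rfl hval, Finset.sum_const, smul_eq_mul]
  -- count the fiber of sign functions
  have hfibcount : (Finset.univ.filter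
      (fun g : Fin n → Fin r => (fun i => (A g i).card) = j)).card =
      Fc * (r - p) ^ m := by
    have heq : (Finset.univ.filter
        (fun g : Fin n → Fin r => (fun i => (A g i).card) = j)) =
        (Finset.univ.filter (fun g : Fin n → Fin r =>
          ∀ i, (Finset.univ.filter fun x => g x = u i).card = j i)) := by
      apply Finset.filter_congr
      intro g _
      simp only [funext_iff]
      exact Iff.rfl
    rw [heq, card_sign_fun u hu j]
  rw [hfibcount, hdiv]
  ring
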